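/- arXiv:2206.04366 — 3 statements merged into one kernel-verified Lean document; each statement's English description precedes it below -/
import Mathlib

section
/- The second-order ODE (1-τ²)ζ'' + 2τ(p-1)ζ' + (p+ℓ)(ℓ-p+1)ζ = 0 with integer parameters p ≥ 1 and 0 ≤ ℓ ≤ p-1 has the two-parameter family of solutions ζ(τ) = A((1-τ)/2)^p P_ℓ^{(p,-p)}(τ) + B((1+τ)/2)^p P_ℓ^{(-p,p)}(τ), where P_ℓ^{(α,β)} are Jacobi polynomials; in particular every such solution is a polynomial in τ. -/
open Finset

/-- Generalized binomial coefficient `C(x, k)` for real `x`. -/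
noncomputable def genBinom (x : ℝ) (k : ℕ) : ℝ :=
  (∏ i ∈ Finset.range k, (x - i)) / (Nat.factorial k)

/-- Jacobi polynomial of degree `n` with parameters `(α, β)`. -/
noncomputable def jacobiP (n : ℕ) (α β : ℝ) (τ : ℝ) : ℝ :=
  ∑ s ∈ Finset.range (n + 1),
    genBinom (n + α) s * genBinom (n + β) (n - s) *
      ((τ - 1) / 2) ^ (n - s) * ((τ + 1) / 2) ^ s

namespace StmtAux

/-- basic monomial -/
noncomputable def Tm (m s : ℕ) (z : ℂ) : ℂ := ((z - 1) / 2) ^ m * ((z + 1) / 2) ^ s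

lemma hasDerivAt_Tm (m s : ℕ) (z : ℂ) :
    HasDerivAt (fun z => Tm m s z)
      ((m : ℂ) / 2 * Tm (m - 1) s z + (s : ℂ) / 2 * Tm m (s - 1) z) z := by
  have hx : HasDerivAt (fun z : ℂ => (z - 1) / 2) (1 / 2) z := by
    simpa using ((hasDerivAt_id z).sub_const 1).div_const 2
  have hy : HasDerivAt (fun z : ℂ => (z + 1) / 2) (1 / 2) z := by
    simpa using ((hasDerivAt_id z).add_const 1).div_const 2
  have h := ((hx.pow m).mul (hy.pow s))
  refine h.congr_deriv ?_
  unfold Tm; simp only [Pi.pow_apply]; ring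

noncomputable def Wf (n : ℕ) (c : ℕ → ℂ) (z : ℂ) : ℂ :=
  ∑ s ∈ range (n + 1), c s * Tm (n - s) s z

noncomputable def Wf1 (n : ℕ) (c : ℕ → ℂ) (z : ℂ) : ℂ :=
  ∑ s ∈ range (n + 1),
    (c s * ((n - s : ℕ) : ℂ) / 2 * Tm (n - s - 1) s z
      + c s * (s : ℂ) / 2 * Tm (n - s) (s - 1) z)

noncomputable def Wf2 (n : ℕ) (c : ℕ → ℂ) (z : ℂ) : ℂ :=
  ∑ s ∈ range (n + 1),
    (c s * ((n - s : ℕ) : ℂ) / 2 *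
        (((n - s - 1 : ℕ) : ℂ) / 2 * Tm (n - s - 1 - 1) s z
          + (s : ℂ) / 2 * Tm (n - s - 1) (s - 1) z)
      + c s * (s : ℂ) / 2 *
        (((n - s : ℕ) : ℂ) / 2 * Tm (n - s - 1) (s - 1) z
          + ((s - 1 : ℕ) : ℂ) / 2 * Tm (n - s) (s - 1 - 1) z))

lemma hasDerivAt_Wf (n : ℕ) (c : ℕ → ℂ) (z : ℂ) :
    HasDerivAt (Wf n c) (Wf1 n c z) z := by
  unfold Wf Wf1
  apply HasDerivAt.fun_sum
  intro s _
  have h := (hasDerivAt_Tm (n - s) s z).const_mul (c s)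
  refine h.congr_deriv ?_
  ring

lemma hasDerivAt_Wf1 (n : ℕ) (c : ℕ → ℂ) (z : ℂ) :
    HasDerivAt (Wf1 n c) (Wf2 n c z) z := by
  unfold Wf1 Wf2
  apply HasDerivAt.fun_sum
  intro s _
  exact ((hasDerivAt_Tm (n - s - 1) s z).const_mul _).add
    ((hasDerivAt_Tm (n - s) (s - 1) z).const_mul _)

lemma perterm' (P L : ℂ) (m s : ℕ) (h : (m : ℂ) + s = P + L) (z : ℂ) :
    (1 - z ^ 2) *
        ((m : ℂ) / 2 * (((m - 1 : ℕ) : ℂ) / 2 * Tm (m - 1 - 1) s z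
            + (s : ℂ) / 2 * Tm (m - 1) (s - 1) z)
          + (s : ℂ) / 2 * ((m : ℂ) / 2 * Tm (m - 1) (s - 1) z
            + ((s - 1 : ℕ) : ℂ) / 2 * Tm m (s - 1 - 1) z))
      + 2 * z * (P - 1) * ((m : ℂ) / 2 * Tm (m - 1) s z + (s : ℂ) / 2 * Tm m (s - 1) z)
      + (P + L) * (L - P + 1) * Tm m s z
    = (s : ℂ) * (P - s) * Tm (m + 1) (s - 1) z
      + ((P + L) * L - 2 * (P + L - s) * s) * Tm m s z
      + (P + L - s) * ((s : ℂ) - L) * Tm (m - 1) (s + 1) z := by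
  have hP : P = (m : ℂ) + s - L := by linear_combination -h
  subst hP
  unfold Tm
  rcases m with _ | _ | m <;> rcases s with _ | _ | s <;>
    simp only [Nat.zero_sub, Nat.sub_zero, Nat.succ_sub_one, Nat.add_sub_cancel] <;>
    push_cast <;> ring

lemma master_ode (p ℓ : ℕ) (c : ℕ → ℂ)
    (h0 : ∀ s, p + ℓ < s → c s = 0)
    (hrec : ∀ t : ℕ,
      ((t : ℂ) + 1) * ((p : ℂ) - ((t : ℂ) + 1)) * c (t + 1)
        + (((p : ℂ) + ℓ) * ℓ - 2 * ((p : ℂ) + ℓ - t) * t) * c t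
        + (if t = 0 then 0
            else ((p : ℂ) + ℓ - ((t : ℂ) - 1)) * (((t : ℂ) - 1) - ℓ) * c (t - 1)) = 0)
    (z : ℂ) :
    (1 - z ^ 2) * Wf2 (p + ℓ) c z + 2 * z * ((p : ℂ) - 1) * Wf1 (p + ℓ) c z
      + ((p : ℂ) + ℓ) * ((ℓ : ℂ) - p + 1) * Wf (p + ℓ) c z = 0 := by
  set n := p + ℓ with hn
  have key : (1 - z ^ 2) * Wf2 n c z + 2 * z * ((p : ℂ) - 1) * Wf1 n c z
      + ((p : ℂ) + ℓ) * ((ℓ : ℂ) - p + 1) * Wf n c z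
      = ∑ s ∈ range (n + 1),
          ((s : ℂ) * ((p : ℂ) - s) * c s * Tm (n - s + 1) (s - 1) z
            + ((((p : ℂ) + ℓ) * ℓ - 2 * ((p : ℂ) + ℓ - s) * s) * c s * Tm (n - s) s z
            + ((p : ℂ) + ℓ - s) * ((s : ℂ) - ℓ) * c s * Tm (n - s - 1) (s + 1) z)) := by
    unfold Wf Wf1 Wf2
    rw [Finset.mul_sum, Finset.mul_sum, Finset.mul_sum, ← Finset.sum_add_distrib,
      ← Finset.sum_add_distrib]
    refine Finset.sum_congr rfl fun s hs => ?_
    have hsn : s ≤ n := by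
      have := Finset.mem_range.mp hs; omega
    have hms : ((n - s : ℕ) : ℂ) + s = (p : ℂ) + ℓ := by
      rw [Nat.cast_sub hsn, hn]; push_cast; ring
    linear_combination (c s) * perterm' (p : ℂ) (ℓ : ℂ) (n - s) s hms z
  rw [key]
  simp only [Finset.sum_add_distrib]
  have hA : (∑ s ∈ range (n + 1), (s : ℂ) * ((p : ℂ) - s) * c s * Tm (n - s + 1) (s - 1) z)
      = ∑ t ∈ range (n + 1),
          ((t : ℂ) + 1) * ((p : ℂ) - ((t : ℂ) + 1)) * c (t + 1) * Tm (n - t) t z := by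
    rw [Finset.sum_range_succ' (fun s => (s : ℂ) * ((p : ℂ) - s) * c s * Tm (n - s + 1) (s - 1) z) n,
      Finset.sum_range_succ]
    have hlast : ((n : ℂ) + 1) * ((p : ℂ) - ((n : ℂ) + 1)) * c (n + 1) * Tm (n - n) n z = 0 := by
      rw [h0 (n + 1) (by omega)]; ring
    rw [hlast]
    simp only [Nat.cast_zero, zero_mul, add_zero]
    refine Finset.sum_congr rfl fun i hi => ?_
    have hin : i < n := Finset.mem_range.mp hi
    have he : n - (i + 1) + 1 = n - i := by omega
    rw [he]
    simp only [Nat.add_sub_cancel]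
    push_cast
    ring
  have hC : (∑ s ∈ range (n + 1), ((p : ℂ) + ℓ - s) * ((s : ℂ) - ℓ) * c s * Tm (n - s - 1) (s + 1) z)
      = ∑ t ∈ range (n + 1),
          (if t = 0 then 0
            else ((p : ℂ) + ℓ - ((t : ℂ) - 1)) * (((t : ℂ) - 1) - ℓ) * c (t - 1)) * Tm (n - t) t z := by
    rw [Finset.sum_range_succ,
      Finset.sum_range_succ' (fun t => (if t = 0 then 0
        else ((p : ℂ) + ℓ - ((t : ℂ) - 1)) * (((t : ℂ) - 1) - ℓ) * c (t - 1)) * Tm (n - t) t z) n]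
    have hlast : ((p : ℂ) + ℓ - n) * ((n : ℂ) - ℓ) * c n * Tm (n - n - 1) (n + 1) z = 0 := by
      have : (p : ℂ) + ℓ - n = 0 := by rw [hn]; push_cast; ring
      rw [this]; ring
    rw [hlast]
    simp only [eq_self_iff_true, if_true, zero_mul, add_zero]
    refine Finset.sum_congr rfl fun i hi => ?_
    have hin : i < n := Finset.mem_range.mp hi
    rw [if_neg (by omega : ¬ i + 1 = 0)]
    have he : n - i - 1 = n - (i + 1) := by omega
    rw [he]
    simp only [Nat.add_sub_cancel]
    push_cast
    ring
  rw [hA, hC]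
  simp only [← Finset.sum_add_distrib]
  apply Finset.sum_eq_zero
  intro t _
  have h := hrec t
  linear_combination (Tm (n - t) t z) * h

noncomputable def cc (p ℓ : ℕ) (s : ℕ) : ℝ :=
  genBinom ((ℓ : ℝ) + p) s * genBinom ((ℓ : ℝ) - p) (ℓ - s)

noncomputable def chat (p ℓ : ℕ) (s : ℕ) : ℂ :=
  if s ≤ ℓ then (cc p ℓ s : ℂ) else 0

lemma R1 (p ℓ t : ℕ) (ht : t < ℓ) :
    ((t : ℝ) + 1) * ((t : ℝ) + 1 - p) * cc p ℓ (t + 1)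
      = ((ℓ : ℝ) + p - t) * ((ℓ : ℝ) - t) * cc p ℓ t := by
  obtain ⟨k, rfl⟩ : ∃ k, ℓ = t + 1 + k := ⟨ℓ - t - 1, by omega⟩
  unfold cc genBinom
  have e1 : t + 1 + k - t = k + 1 := by omega
  have e2 : t + 1 + k - (t + 1) = k := by omega
  rw [e1, e2, Finset.prod_range_succ, Finset.prod_range_succ, Nat.factorial_succ,
    Nat.factorial_succ]
  have h1 : ((t.factorial : ℝ)) ≠ 0 := Nat.cast_ne_zero.mpr t.factorial_ne_zero
  have h2 : ((k.factorial : ℝ)) ≠ 0 := Nat.cast_ne_zero.mpr k.factorial_ne_zero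
  push_cast
  field_simp
  ring

lemma interior_r (p ℓ t : ℕ) (h1 : 1 ≤ t) (h2 : t + 1 ≤ ℓ) (hℓp : ℓ + 1 ≤ p) :
    ((t : ℝ) + 1) * ((p : ℝ) - ((t : ℝ) + 1)) * cc p ℓ (t + 1)
      + (((p : ℝ) + ℓ) * ℓ - 2 * ((p : ℝ) + ℓ - t) * t) * cc p ℓ t
      + ((p : ℝ) + ℓ - ((t : ℝ) - 1)) * (((t : ℝ) - 1) - ℓ) * cc p ℓ (t - 1) = 0 := by
  obtain ⟨t, rfl⟩ : ∃ t', t = t' + 1 := ⟨t - 1, by omega⟩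
  simp only [Nat.add_sub_cancel]
  have r1 := R1 p ℓ (t + 1) (by omega)
  have r0 := R1 p ℓ t (by omega)
  have hd1 : ((t : ℝ) + 1 + 1) ≠ 0 := by positivity
  have hd2 : ((t : ℝ) + 1 + 1 - p) ≠ 0 := by
    have : (t : ℝ) + 2 < p := by exact_mod_cast (by omega : t + 2 < p)
    intro h; linarith [this]
  have hd4 : ((ℓ : ℝ) + p - t) ≠ 0 := by
    have : (t : ℝ) < ℓ := by exact_mod_cast (by omega : t < ℓ)
    have hp0 : (0 : ℝ) ≤ p := Nat.cast_nonneg p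
    intro h; linarith
  have hd5 : ((ℓ : ℝ) - t) ≠ 0 := by
    have : (t : ℝ) < ℓ := by exact_mod_cast (by omega : t < ℓ)
    intro h; linarith
  have hc1 : cc p ℓ (t + 1 + 1)
      = (((ℓ : ℝ) + p - (t + 1)) * ((ℓ : ℝ) - (t + 1)) * cc p ℓ (t + 1))
        / (((t : ℝ) + 1 + 1) * ((t : ℝ) + 1 + 1 - p)) := by
    rw [eq_div_iff (by exact mul_ne_zero hd1 hd2)]
    push_cast at r1 ⊢
    linear_combination r1
  have hc0 : cc p ℓ t
      = (((t : ℝ) + 1) * ((t : ℝ) + 1 - p) * cc p ℓ (t + 1))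
        / (((ℓ : ℝ) + p - t) * ((ℓ : ℝ) - t)) := by
    rw [eq_div_iff (by exact mul_ne_zero hd4 hd5)]
    push_cast at r0 ⊢
    linear_combination -r0
  rw [hc1, hc0]
  push_cast
  field_simp
  ring

lemma hrec_chat (p ℓ : ℕ) (hℓp : ℓ + 1 ≤ p) (t : ℕ) :
    ((t : ℂ) + 1) * ((p : ℂ) - ((t : ℂ) + 1)) * chat p ℓ (t + 1)
      + (((p : ℂ) + ℓ) * ℓ - 2 * ((p : ℂ) + ℓ - t) * t) * chat p ℓ t
      + (if t = 0 then 0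
          else ((p : ℂ) + ℓ - ((t : ℂ) - 1)) * (((t : ℂ) - 1) - ℓ) * chat p ℓ (t - 1)) = 0 := by
  rcases Nat.lt_or_ge t (ℓ + 2) with htl | htl
  swap
  · have e1 : chat p ℓ (t + 1) = 0 := by unfold chat; rw [if_neg (by omega)]
    have e2 : chat p ℓ t = 0 := by unfold chat; rw [if_neg (by omega)]
    have e3 : chat p ℓ (t - 1) = 0 := by unfold chat; rw [if_neg (by omega)]
    rw [e1, e2, e3, if_neg (by omega : ¬ t = 0)]; ring
  rcases Nat.lt_or_ge t ℓ with ht | ht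
  · have e1 : chat p ℓ (t + 1) = (cc p ℓ (t + 1) : ℂ) := by unfold chat; rw [if_pos (by omega)]
    have e2 : chat p ℓ t = (cc p ℓ t : ℂ) := by unfold chat; rw [if_pos (by omega)]
    rcases Nat.eq_zero_or_pos t with rfl | htpos
    · rw [e1, e2, if_pos rfl]
      have h := R1 p ℓ 0 (by omega)
      have h' := congrArg (fun x : ℝ => (x : ℂ)) h
      push_cast at h' ⊢
      linear_combination -h'
    · have e3 : chat p ℓ (t - 1) = (cc p ℓ (t - 1) : ℂ) := by unfold chat; rw [if_pos (by omega)]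
      rw [e1, e2, e3, if_neg (by omega : ¬ t = 0)]
      have h := interior_r p ℓ t htpos (by omega) hℓp
      have h' := congrArg (fun x : ℝ => (x : ℂ)) h
      push_cast at h' ⊢
      linear_combination h'
  rcases Nat.eq_or_lt_of_le ht with rfl | htgt
  · rcases Nat.eq_zero_or_pos ℓ with rfl | htpos
    · have e1 : chat p 0 1 = 0 := by unfold chat; rw [if_neg (by omega)]
      rw [e1, if_pos rfl]
      push_cast
      ring
    · obtain ⟨l', rfl⟩ : ∃ l', ℓ = l' + 1 := ⟨ℓ - 1, by omega⟩
      have e1 : chat p (l' + 1) (l' + 1 + 1) = 0 := by unfold chat; rw [if_neg (by omega)]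
      have e2 : chat p (l' + 1) (l' + 1) = (cc p (l' + 1) (l' + 1) : ℂ) := by
        unfold chat; rw [if_pos (by omega)]
      have e3 : chat p (l' + 1) (l' + 1 - 1) = (cc p (l' + 1) l' : ℂ) := by
        unfold chat; simp only [Nat.add_sub_cancel]; rw [if_pos (by omega)]
      rw [e1, e2, e3, if_neg (by omega : ¬ l' + 1 = 0)]
      have h := R1 p (l' + 1) l' (by omega)
      have h' := congrArg (fun x : ℝ => (x : ℂ)) h
      push_cast at h' ⊢
      linear_combination h'
  · have htℓ : t = ℓ + 1 := by omega
    subst htℓ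
    have e1 : chat p ℓ (ℓ + 1 + 1) = 0 := by unfold chat; rw [if_neg (by omega)]
    have e2 : chat p ℓ (ℓ + 1) = 0 := by unfold chat; rw [if_neg (by omega)]
    have e3 : chat p ℓ (ℓ + 1 - 1) = (chat p ℓ ℓ) := by norm_num
    rw [e1, e2, e3, if_neg (by omega : ¬ ℓ + 1 = 0)]
    push_cast
    ring

noncomputable def fSol (p ℓ : ℕ) (A B : ℂ) (z : ℂ) : ℂ :=
  A * (-1) ^ p * Wf (p + ℓ) (chat p ℓ) z + B * (-1) ^ (p + ℓ) * Wf (p + ℓ) (chat p ℓ) (-z)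

noncomputable def fSol1 (p ℓ : ℕ) (A B : ℂ) (z : ℂ) : ℂ :=
  A * (-1) ^ p * Wf1 (p + ℓ) (chat p ℓ) z - B * (-1) ^ (p + ℓ) * Wf1 (p + ℓ) (chat p ℓ) (-z)

noncomputable def fSol2 (p ℓ : ℕ) (A B : ℂ) (z : ℂ) : ℂ :=
  A * (-1) ^ p * Wf2 (p + ℓ) (chat p ℓ) z + B * (-1) ^ (p + ℓ) * Wf2 (p + ℓ) (chat p ℓ) (-z)

lemma hasDerivAt_fSol (p ℓ : ℕ) (A B : ℂ) (z : ℂ) :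
    HasDerivAt (fSol p ℓ A B) (fSol1 p ℓ A B z) z := by
  unfold fSol fSol1
  have h1 := (hasDerivAt_Wf (p + ℓ) (chat p ℓ) z).const_mul (A * (-1 : ℂ) ^ p)
  have h2' : HasDerivAt (fun z : ℂ => Wf (p + ℓ) (chat p ℓ) (-z))
      (-(Wf1 (p + ℓ) (chat p ℓ) (-z))) z := by
    have := (hasDerivAt_Wf (p + ℓ) (chat p ℓ) (-z)).comp z (hasDerivAt_neg z)
    simp only [mul_neg, mul_one] at this
    exact this
  have h2 := h2'.const_mul (B * (-1 : ℂ) ^ (p + ℓ))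
  refine (h1.add h2).congr_deriv ?_
  ring

lemma hasDerivAt_fSol1 (p ℓ : ℕ) (A B : ℂ) (z : ℂ) :
    HasDerivAt (fSol1 p ℓ A B) (fSol2 p ℓ A B z) z := by
  unfold fSol1 fSol2
  have h1 := (hasDerivAt_Wf1 (p + ℓ) (chat p ℓ) z).const_mul (A * (-1 : ℂ) ^ p)
  have h2' : HasDerivAt (fun z : ℂ => Wf1 (p + ℓ) (chat p ℓ) (-z))
      (-(Wf2 (p + ℓ) (chat p ℓ) (-z))) z := by
    have := (hasDerivAt_Wf1 (p + ℓ) (chat p ℓ) (-z)).comp z (hasDerivAt_neg z)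
    simp only [mul_neg, mul_one] at this
    exact this
  have h2 := h2'.const_mul (B * (-1 : ℂ) ^ (p + ℓ))
  refine (h1.sub h2).congr_deriv ?_
  ring

lemma ode_fSol (p ℓ : ℕ) (A B : ℂ) (hℓp : ℓ + 1 ≤ p) (z : ℂ) :
    (1 - z ^ 2) * fSol2 p ℓ A B z + 2 * z * ((p : ℂ) - 1) * fSol1 p ℓ A B z
      + ((p : ℂ) + ℓ) * ((ℓ : ℂ) - p + 1) * fSol p ℓ A B z = 0 := by
  have h0 : ∀ s, p + ℓ < s → chat p ℓ s = 0 := fun s hs => by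
    unfold chat; rw [if_neg (by omega)]
  have h1 := master_ode p ℓ (chat p ℓ) h0 (hrec_chat p ℓ hℓp) z
  have h2 := master_ode p ℓ (chat p ℓ) h0 (hrec_chat p ℓ hℓp) (-z)
  unfold fSol fSol1 fSol2
  linear_combination (A * (-1 : ℂ) ^ p) * h1 + (B * (-1 : ℂ) ^ (p + ℓ)) * h2

lemma matchU (p ℓ : ℕ) (hℓp : ℓ + 1 ≤ p) (τ : ℝ) :
    (((1 - τ) / 2 : ℝ) : ℂ) ^ p * ((jacobiP ℓ (p : ℝ) (-(p : ℝ)) τ : ℝ) : ℂ)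
      = (-1) ^ p * Wf (p + ℓ) (chat p ℓ) (τ : ℂ) := by
  have hred : Wf (p + ℓ) (chat p ℓ) (τ : ℂ)
      = ∑ s ∈ range (ℓ + 1), (cc p ℓ s : ℂ) * Tm (p + ℓ - s) s (τ : ℂ) := by
    unfold Wf
    rw [← Finset.sum_subset (Finset.range_subset_range.mpr (by omega : ℓ + 1 ≤ p + ℓ + 1))]
    · refine Finset.sum_congr rfl fun s hs => ?_
      have hsl : s ≤ ℓ := by have := Finset.mem_range.mp hs; omega
      unfold chat; rw [if_pos hsl]
    · intro x _ hx
      have : ¬ x ≤ ℓ := by simp only [Finset.mem_range] at hx; omega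
      unfold chat; rw [if_neg this]; ring
  rw [hred]
  unfold jacobiP cc Tm
  push_cast
  rw [Finset.mul_sum, Finset.mul_sum]
  refine Finset.sum_congr rfl fun s hs => ?_
  have hsl : s ≤ ℓ := by have := Finset.mem_range.mp hs; omega
  have harg : (ℓ : ℝ) + -(p : ℝ) = (ℓ : ℝ) - (p : ℝ) := by ring
  rw [harg]
  have he : p + ℓ - s = p + (ℓ - s) := by omega
  rw [he, pow_add]
  have hsign : ((1 - (τ : ℂ)) / 2) ^ p = (-1) ^ p * (((τ : ℂ) - 1) / 2) ^ p := by
    rw [show ((1 - (τ : ℂ)) / 2) = -(((τ : ℂ) - 1) / 2) by ring, neg_pow]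
  rw [hsign]
  push_cast
  ring

lemma matchV (p ℓ : ℕ) (hℓp : ℓ + 1 ≤ p) (τ : ℝ) :
    (((1 + τ) / 2 : ℝ) : ℂ) ^ p * ((jacobiP ℓ (-(p : ℝ)) (p : ℝ) τ : ℝ) : ℂ)
      = (-1) ^ (p + ℓ) * Wf (p + ℓ) (chat p ℓ) (-(τ : ℂ)) := by
  have hred : Wf (p + ℓ) (chat p ℓ) (-(τ : ℂ))
      = ∑ s ∈ range (ℓ + 1), (cc p ℓ s : ℂ) * Tm (p + ℓ - s) s (-(τ : ℂ)) := by
    unfold Wf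
    rw [← Finset.sum_subset (Finset.range_subset_range.mpr (by omega : ℓ + 1 ≤ p + ℓ + 1))]
    · refine Finset.sum_congr rfl fun s hs => ?_
      have hsl : s ≤ ℓ := by have := Finset.mem_range.mp hs; omega
      unfold chat; rw [if_pos hsl]
    · intro x _ hx
      have : ¬ x ≤ ℓ := by simp only [Finset.mem_range] at hx; omega
      unfold chat; rw [if_neg this]; ring
  rw [hred]
  unfold jacobiP cc Tm
  push_cast
  rw [Finset.mul_sum, Finset.mul_sum, ← Finset.sum_range_reflect]
  refine Finset.sum_congr rfl fun s hs => ?_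
  have hsl : s ≤ ℓ := by have := Finset.mem_range.mp hs; omega
  simp only [Nat.add_sub_cancel]
  have he0 : ℓ - (ℓ - s) = s := by omega
  rw [he0]
  have harg : (ℓ : ℝ) + -(p : ℝ) = (ℓ : ℝ) - (p : ℝ) := by ring
  rw [harg]
  have he : p + ℓ - s = p + (ℓ - s) := by omega
  have e1 : ((-(τ : ℂ) - 1) / 2) = -(((τ : ℂ) + 1) / 2) := by ring
  have e2 : ((-(τ : ℂ) + 1) / 2) = -(((τ : ℂ) - 1) / 2) := by ring
  rw [he, e1, e2, pow_add (-(((τ : ℂ) + 1) / 2)) p (ℓ - s),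
    neg_pow (((τ : ℂ) + 1) / 2) p, neg_pow (((τ : ℂ) + 1) / 2) (ℓ - s),
    neg_pow (((τ : ℂ) - 1) / 2) s]
  have hsign : ((-1 : ℂ)) ^ (p + ℓ) * (((-1 : ℂ)) ^ p * ((-1 : ℂ)) ^ (ℓ - s))
      * ((-1 : ℂ)) ^ s = 1 := by
    rw [← pow_add, ← pow_add, ← pow_add,
      show p + ℓ + (p + (ℓ - s)) + s = 2 * (p + ℓ) by omega, pow_mul]
    norm_num
  linear_combination (-(((genBinom ((ℓ : ℝ) - (p : ℝ)) (ℓ - s) : ℝ) : ℂ)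
      * ((genBinom ((ℓ : ℝ) + (p : ℝ)) s : ℝ) : ℂ)
      * (((τ : ℂ) + 1) / 2) ^ p * (((τ : ℂ) + 1) / 2) ^ (ℓ - s)
      * (((τ : ℂ) - 1) / 2) ^ s)) * hsign

noncomputable def PW (p ℓ : ℕ) : Polynomial ℂ :=
  ∑ s ∈ range (p + ℓ + 1),
    Polynomial.C (chat p ℓ s) * (Polynomial.C (1 / 2 : ℂ) * (Polynomial.X - 1)) ^ (p + ℓ - s)
      * (Polynomial.C (1 / 2 : ℂ) * (Polynomial.X + 1)) ^ s

lemma PW_eval (p ℓ : ℕ) (z : ℂ) : (PW p ℓ).eval z = Wf (p + ℓ) (chat p ℓ) z := by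
  unfold PW Wf Tm
  rw [Polynomial.eval_finset_sum]
  refine Finset.sum_congr rfl fun s _ => ?_
  simp only [Polynomial.eval_mul, Polynomial.eval_pow, Polynomial.eval_C, Polynomial.eval_sub,
    Polynomial.eval_add, Polynomial.eval_X, Polynomial.eval_one]
  ring

lemma q_eval (p ℓ : ℕ) (A B : ℂ) (z : ℂ) :
    (Polynomial.C (A * (-1) ^ p) * PW p ℓ
      + Polynomial.C (B * (-1) ^ (p + ℓ)) * (PW p ℓ).comp (-Polynomial.X)).eval z
    = fSol p ℓ A B z := by
  simp only [Polynomial.eval_add, Polynomial.eval_mul, Polynomial.eval_C, Polynomial.eval_comp,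
    Polynomial.eval_neg, Polynomial.eval_X, PW_eval]
  unfold fSol
  ring

end StmtAux

/-- for integers `p ≥ 1`, `0 ≤ ℓ ≤ p-1`, the function
`ζ(τ) = A ((1-τ)/2)^p P_ℓ^{(p,-p)}(τ) + B ((1+τ)/2)^p P_ℓ^{(-p,p)}(τ)` solves
`(1-τ²)ζ'' + 2τ(p-1)ζ' + (p+ℓ)(ℓ-p+1)ζ = 0`, and it is a polynomial in `τ`. -/
theorem stmt0 (p ℓ : ℕ) (hp : 1 ≤ p) (hℓ : ℓ + 1 ≤ p) (A B : ℂ)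
    (ζ : ℝ → ℂ)
    (hζ : ∀ τ : ℝ, ζ τ =
      A * (((1 - τ) / 2 : ℝ) : ℂ) ^ p * (jacobiP ℓ (p : ℝ) (-(p : ℝ)) τ : ℂ) +
      B * (((1 + τ) / 2 : ℝ) : ℂ) ^ p * (jacobiP ℓ (-(p : ℝ)) (p : ℝ) τ : ℂ)) :
    (∀ τ : ℝ,
      (1 - (τ : ℂ) ^ 2) * deriv (deriv ζ) τ +
        2 * (τ : ℂ) * ((p : ℂ) - 1) * deriv ζ τ +
        ((p : ℂ) + (ℓ : ℂ)) * ((ℓ : ℂ) - (p : ℂ) + 1) * ζ τ = 0) ∧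
    ∃ q : Polynomial ℂ, ∀ τ : ℝ, ζ τ = q.eval (τ : ℂ) := by
  have hmatch : ∀ τ : ℝ, ζ τ = StmtAux.fSol p ℓ A B (τ : ℂ) := by
    intro τ
    rw [hζ τ]
    have hu := StmtAux.matchU p ℓ hℓ τ
    have hv := StmtAux.matchV p ℓ hℓ τ
    unfold StmtAux.fSol
    linear_combination A * hu + B * hv
  have hzf : ζ = fun τ : ℝ => StmtAux.fSol p ℓ A B (τ : ℂ) := funext hmatch
  subst hzf
  constructor
  · intro τ
    have hD1 : (deriv fun τ : ℝ => StmtAux.fSol p ℓ A B (τ : ℂ))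
        = fun τ : ℝ => StmtAux.fSol1 p ℓ A B (τ : ℂ) :=
      funext fun τ => ((StmtAux.hasDerivAt_fSol p ℓ A B (τ : ℂ)).comp_ofReal).deriv
    rw [hD1]
    have hD2 : deriv (fun τ : ℝ => StmtAux.fSol1 p ℓ A B (τ : ℂ)) τ
        = StmtAux.fSol2 p ℓ A B (τ : ℂ) :=
      ((StmtAux.hasDerivAt_fSol1 p ℓ A B (τ : ℂ)).comp_ofReal).deriv
    rw [hD2]
    exact StmtAux.ode_fSol p ℓ A B hℓ (τ : ℂ)
  · refine ⟨Polynomial.C (A * (-1) ^ p) * StmtAux.PW p ℓ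
      + Polynomial.C (B * (-1) ^ (p + ℓ)) * (StmtAux.PW p ℓ).comp (-Polynomial.X),
      fun τ => ?_⟩
    exact (StmtAux.q_eval p ℓ A B (τ : ℂ)).symm
end

section
/- For ℓ = p, the general solution of the ODE (1-τ²)ζ'' + 2τ(p-1)ζ' + 2p·ζ = 0 (i.e. the coefficient (p+ℓ)(ℓ-p+1) with ℓ = p) on the interval (-1,1) is ζ(τ) = ((1-τ)/2)^p ((1+τ)/2)^p (C₁ + C₂ ∫₀^τ ds/(1-s²)^{p+1}) for constants C₁, C₂. -/
open Set intervalIntegral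

namespace S1

noncomputable def F (p : ℕ) (τ : ℝ) : ℝ := ∫ s in (0:ℝ)..τ, 1 / (1 - s ^ 2) ^ (p + 1)
noncomputable def W (p : ℕ) (τ : ℝ) : ℝ := ((1 - τ^2)/4)^p
noncomputable def W1 (p : ℕ) (τ : ℝ) : ℝ := (p:ℝ) * ((1 - τ^2)/4)^(p-1) * (-τ/2)
noncomputable def W2 (p : ℕ) (τ : ℝ) : ℝ :=
  ((p:ℝ) * (((p-1:ℕ):ℝ) * ((1 - τ^2)/4)^(p-1-1) * (-τ/2))) * (-τ/2)
    + ((p:ℝ) * ((1 - τ^2)/4)^(p-1)) * (-1/2)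
noncomputable def F1 (p : ℕ) (τ : ℝ) : ℝ := 1 / (1 - τ^2)^(p+1)
noncomputable def F2 (p : ℕ) (τ : ℝ) : ℝ :=
  -((((p:ℝ)+1) * (1 - τ^2)^p * (-(2*τ)))) / ((1 - τ^2)^(p+1))^2

lemma hb_pos {τ : ℝ} (hτ : τ ∈ Ioo (-1:ℝ) 1) : 0 < 1 - τ^2 := by
  nlinarith [hτ.1, hτ.2]

lemma hb_ne {τ : ℝ} (hτ : τ ∈ Ioo (-1:ℝ) 1) : (1:ℝ) - τ^2 ≠ 0 := (hb_pos hτ).ne'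

lemma hy : ∀ τ : ℝ, HasDerivAt (fun τ : ℝ => (1 - τ^2)/4) (-τ/2) τ := by
  intro τ
  have h := ((hasDerivAt_pow 2 τ).const_sub 1).div_const 4
  refine h.congr_deriv (Eq.symm ?_)
  all_goals (push_cast; ring)

lemma W_hasDeriv (p : ℕ) (τ : ℝ) : HasDerivAt (W p) (W1 p τ) τ := by
  have h := (hy τ).pow p
  refine h.congr_deriv (Eq.symm ?_)
  all_goals rfl

lemma W1_hasDeriv (p : ℕ) (τ : ℝ) : HasDerivAt (W1 p) (W2 p τ) τ := by
  have h1 := ((hy τ).pow (p-1)).const_mul (p:ℝ)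
  have h2 : HasDerivAt (fun τ : ℝ => -τ/2) (-1/2) τ := by
    have := (hasDerivAt_id τ).neg.div_const 2
    refine this.congr_deriv (Eq.symm ?_)
    all_goals ring
  have h := h1.mul h2
  exact h

lemma b_hasDeriv (τ : ℝ) : HasDerivAt (fun τ : ℝ => 1 - τ^2) (-(2*τ)) τ := by
  have := (hasDerivAt_pow 2 τ).const_sub 1
  refine this.congr_deriv (Eq.symm ?_)
  all_goals (push_cast; ring)

lemma bpow_hasDeriv (n : ℕ) (τ : ℝ) :
    HasDerivAt (fun τ : ℝ => (1 - τ^2)^n) ((n:ℝ) * (1 - τ^2)^(n-1) * (-(2*τ))) τ := by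
  exact (b_hasDeriv τ).pow n

lemma F1_hasDeriv (p : ℕ) {τ : ℝ} (hτ : τ ∈ Ioo (-1:ℝ) 1) :
    HasDerivAt (F1 p) (F2 p τ) τ := by
  have h := (bpow_hasDeriv (p+1) τ).inv (pow_ne_zero _ (hb_ne hτ))
  have : F1 p = fun τ : ℝ => ((1 - τ^2)^(p+1))⁻¹ := by
    funext τ; simp [F1, one_div]
  rw [this]
  refine h.congr_deriv (Eq.symm ?_)
  simp only [F2, Nat.add_sub_cancel]
  all_goals (push_cast; ring)

lemma F_hasDeriv (p : ℕ) {τ : ℝ} (hτ : τ ∈ Ioo (-1:ℝ) 1) :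
    HasDerivAt (F p) (F1 p τ) τ := by
  have hcont : ContinuousOn (fun s : ℝ => 1 / (1 - s ^ 2) ^ (p + 1)) (Ioo (-1:ℝ) 1) := by
    apply ContinuousOn.div continuousOn_const
    · exact (((continuousOn_const.sub (continuousOn_pow 2))).pow _)
    · intro s hs; exact pow_ne_zero _ (hb_ne hs)
  have hsub : Set.uIcc 0 τ ⊆ Ioo (-1:ℝ) 1 := by
    intro s hs
    rw [Set.mem_uIcc] at hs
    constructor
    · rcases hs with ⟨h1,h2⟩|⟨h1,h2⟩ <;> nlinarith [hτ.1, hτ.2]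
    · rcases hs with ⟨h1,h2⟩|⟨h1,h2⟩ <;> nlinarith [hτ.1, hτ.2]
  have hint : IntervalIntegrable (fun s : ℝ => 1 / (1 - s ^ 2) ^ (p + 1)) MeasureTheory.volume 0 τ :=
    (hcont.mono hsub).intervalIntegrable
  have hmeas : StronglyMeasurableAtFilter (fun s : ℝ => 1 / (1 - s ^ 2) ^ (p + 1)) (nhds τ) MeasureTheory.volume := hcont.stronglyMeasurableAtFilter isOpen_Ioo τ hτ
  have hca : ContinuousAt (fun s : ℝ => 1 / (1 - s ^ 2) ^ (p + 1)) τ :=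
    (hcont.continuousAt (isOpen_Ioo.mem_nhds hτ))
  have h := intervalIntegral.integral_hasDerivAt_right hint hmeas hca
  have : F1 p τ = 1 / (1 - τ ^ 2) ^ (p + 1) := rfl
  rw [this]; exact h


lemma hbC_ne {τ : ℝ} (hτ : τ ∈ Ioo (-1:ℝ) 1) : (1:ℂ) - (τ:ℂ)^2 ≠ 0 := by
  have h := Complex.ofReal_ne_zero.2 (hb_ne hτ)
  push_cast at h
  exact h

lemma mem0 : (0:ℝ) ∈ Ioo (-1:ℝ) 1 := Set.mem_Ioo.mpr ⟨by norm_num, by norm_num⟩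

lemma key1 (p : ℕ) (hp : 1 ≤ p) (τ : ℝ) :
    (1 - τ^2) * W2 p τ + 2*τ*((p:ℝ)-1) * W1 p τ + 2*(p:ℝ) * W p τ = 0 := by
  obtain ⟨q, rfl⟩ : ∃ q, p = q + 1 := ⟨p - 1, (Nat.succ_pred_eq_of_pos hp).symm⟩
  unfold W W1 W2
  simp only [Nat.add_sub_cancel]
  rcases q with _ | r
  · norm_num; ring
  · simp only [Nat.add_sub_cancel]
    push_cast
    ring

lemma key2 (p : ℕ) (hp : 1 ≤ p) {τ : ℝ} (hτ : τ ∈ Ioo (-1:ℝ) 1) :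
    (1 - τ^2) * (2 * W1 p τ * F1 p τ + W p τ * F2 p τ)
      + 2*τ*((p:ℝ)-1) * (W p τ * F1 p τ) = 0 := by
  obtain ⟨q, rfl⟩ : ∃ q, p = q + 1 := ⟨p - 1, (Nat.succ_pred_eq_of_pos hp).symm⟩
  unfold W W1 F1 F2
  simp only [Nat.add_sub_cancel]
  have hb := hb_ne hτ
  field_simp
  ring

lemma const_on {f : ℝ → ℂ} (hf : ∀ x ∈ Ioo (-1:ℝ) 1, HasDerivAt f 0 x)
    {x y : ℝ} (hx : x ∈ Ioo (-1:ℝ) 1) (hy : y ∈ Ioo (-1:ℝ) 1) : f x = f y := by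
  apply (convex_Ioo (-1:ℝ) 1).is_const_of_fderivWithin_eq_zero
    (fun z hz => (hf z hz).differentiableAt.differentiableWithinAt) ?_ hx hy
  intro z hz
  rw [fderivWithin_of_isOpen isOpen_Ioo hz, (hf z hz).hasFDerivAt.fderiv]
  ext w
  simp


lemma Wform (p : ℕ) (τ : ℝ) : ((1 - τ)/2)^p * ((1 + τ)/2)^p = W p τ := by
  rw [W, ← mul_pow]; congr 1; ring

lemma W_ne (p : ℕ) {τ : ℝ} (hτ : τ ∈ Ioo (-1:ℝ) 1) : W p τ ≠ 0 :=
  pow_ne_zero _ (by have := hb_ne hτ; intro h; apply this; linarith [h] )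

end S1

open S1

/-- for `ℓ = p ≥ 1`, a (twice differentiable) function on `(-1,1)`
solves `(1-τ²)ζ'' + 2τ(p-1)ζ' + 2pζ = 0` if and only if it has the form
`ζ(τ) = ((1-τ)/2)^p ((1+τ)/2)^p (C₁ + C₂ ∫₀^τ ds/(1-s²)^{p+1})`. -/
theorem stmt1 (p : ℕ) (hp : 1 ≤ p) (ζ : ℝ → ℂ)
    (hreg : ∀ τ ∈ Set.Ioo (-1 : ℝ) 1, ContDiffAt ℝ 2 ζ τ) :
    (∀ τ ∈ Set.Ioo (-1 : ℝ) 1,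
      (1 - (τ : ℂ) ^ 2) * deriv (deriv ζ) τ +
        2 * (τ : ℂ) * ((p : ℂ) - 1) * deriv ζ τ + 2 * (p : ℂ) * ζ τ = 0) ↔
    ∃ C₁ C₂ : ℂ, ∀ τ ∈ Set.Ioo (-1 : ℝ) 1,
      ζ τ = ((((1 - τ) / 2) ^ p * ((1 + τ) / 2) ^ p : ℝ) : ℂ) *
        (C₁ + C₂ * ((∫ s in (0 : ℝ)..τ, 1 / (1 - s ^ 2) ^ (p + 1) : ℝ) : ℂ)) := by
  constructor
  · intro hODE
    obtain ⟨q, rfl⟩ : ∃ q, p = q + 1 := ⟨p - 1, (Nat.succ_pred_eq_of_pos hp).symm⟩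
    have hζd : ∀ τ ∈ Ioo (-1:ℝ) 1, HasDerivAt ζ (deriv ζ τ) τ := fun τ hτ =>
      ((hreg τ hτ).differentiableAt (by norm_num)).hasDerivAt
    have hζcd : ContDiffOn ℝ 2 ζ (Ioo (-1:ℝ) 1) := fun τ hτ => (hreg τ hτ).contDiffWithinAt
    have hdcd : ContDiffOn ℝ 1 (deriv ζ) (Ioo (-1:ℝ) 1) :=
      hζcd.deriv_of_isOpen isOpen_Ioo (by norm_num)
    have hdζd : ∀ τ ∈ Ioo (-1:ℝ) 1, HasDerivAt (deriv ζ) (deriv (deriv ζ) τ) τ := fun τ hτ =>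
      (((hdcd.differentiableOn (by norm_num)) τ hτ).differentiableAt
        (isOpen_Ioo.mem_nhds hτ)).hasDerivAt
    have hb1 : ∀ τ : ℝ, HasDerivAt (fun τ : ℝ => (1:ℂ) - (τ:ℂ)^2) (-(2*(τ:ℂ))) τ := by
      intro τ
      have h := (b_hasDeriv τ).ofReal_comp
      push_cast at h
      exact h
    have hbp1 : ∀ τ : ℝ, HasDerivAt (fun τ : ℝ => ((1:ℂ) - (τ:ℂ)^2)^(q+1))
        (((q:ℂ)+1) * ((1:ℂ) - (τ:ℂ)^2)^q * (-(2*(τ:ℂ)))) τ := by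
      intro τ
      have h := (bpow_hasDeriv (q+1) τ).ofReal_comp
      simp only [Nat.add_sub_cancel] at h
      push_cast at h
      convert h using 1
      all_goals ring
    have hWcd : ∀ τ : ℝ, HasDerivAt (fun τ : ℝ => (((1:ℂ) - (τ:ℂ)^2)/4)^(q+1))
        (((q:ℂ)+1) * (((1:ℂ) - (τ:ℂ)^2)/4)^q * (-(τ:ℂ)/2)) τ := by
      intro τ
      have h := (W_hasDeriv (q+1) τ).ofReal_comp
      simp only [W, W1, Nat.add_sub_cancel] at h
      push_cast at h
      convert h using 1
      all_goals ring
    set A : ℝ → ℂ := fun τ => deriv ζ τ * ((W (q+1) τ : ℝ) : ℂ)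
        - ζ τ * ((W1 (q+1) τ : ℝ) : ℂ) with hA
    have hAd : ∀ τ ∈ Ioo (-1:ℝ) 1, HasDerivAt A
        (2 * (τ:ℂ) * (((q:ℂ)+1)-1) * (-(A τ)) * ((1:ℂ) - (τ:ℂ)^2)⁻¹) τ := by
      intro τ hτ
      have hbC := hbC_ne hτ
      have h0 := ((hdζd τ hτ).mul ((W_hasDeriv (q+1) τ).ofReal_comp)).sub
        ((hζd τ hτ).mul ((W1_hasDeriv (q+1) τ).ofReal_comp))
      refine h0.congr_deriv (Eq.symm ?_)
      have k1 := congrArg (fun x : ℝ => (x : ℂ)) (key1 (q+1) hp τ)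
      have hO := hODE τ hτ
      apply mul_right_cancel₀ hbC
      rw [mul_assoc, inv_mul_cancel₀ hbC, mul_one]
      simp only [hA, W, W1, W2, Nat.add_sub_cancel] at k1 ⊢
      push_cast at k1 hO ⊢
      linear_combination (-((((1:ℂ) - (τ:ℂ)^2)/4)^(q+1))) * hO + (ζ τ) * k1
    set v : ℝ → ℂ := fun τ => (A τ * ((1:ℂ) - (τ:ℂ)^2)) / (((1:ℂ) - (τ:ℂ)^2)^(q+1)) with hv
    have hvd : ∀ τ ∈ Ioo (-1:ℝ) 1, HasDerivAt v 0 τ := by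
      intro τ hτ
      have hbC := hbC_ne hτ
      have hbp : ((1:ℂ) - (τ:ℂ)^2)^(q+1) ≠ 0 := pow_ne_zero _ hbC
      have h := (((hAd τ hτ).mul (hb1 τ))).div (hbp1 τ) hbp
      refine h.congr_deriv (Eq.symm ?_)
      simp only [Pi.mul_apply]
      field_simp
      ring
    have hvc0 : ∀ τ ∈ Ioo (-1:ℝ) 1, v τ = v 0 :=
      fun τ hτ => const_on hvd hτ mem0
    obtain ⟨c, hvc⟩ : ∃ c : ℂ, ∀ τ ∈ Ioo (-1:ℝ) 1, v τ = c := ⟨v 0, hvc0⟩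
    have hAval : ∀ τ ∈ Ioo (-1:ℝ) 1,
        A τ * ((1:ℂ) - (τ:ℂ)^2) = c * ((1:ℂ) - (τ:ℂ)^2)^(q+1) := by
      intro τ hτ
      have h := hvc τ hτ
      have hbC := hbC_ne hτ
      have hbp : ((1:ℂ) - (τ:ℂ)^2)^(q+1) ≠ 0 := pow_ne_zero _ hbC
      rw [hv] at h
      field_simp at h
      linear_combination h
    set G : ℝ → ℂ := fun τ => ζ τ / ((((1:ℂ) - (τ:ℂ)^2)/4)^(q+1))
        - c * 16^(q+1) * ((F (q+1) τ : ℝ) : ℂ) with hG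
    have hGd : ∀ τ ∈ Ioo (-1:ℝ) 1, HasDerivAt G 0 τ := by
      intro τ hτ
      have hbC := hbC_ne hτ
      have hWne : ((((1:ℂ) - (τ:ℂ)^2))/4)^(q+1) ≠ 0 :=
        pow_ne_zero _ (div_ne_zero hbC (by norm_num))
      have h := ((hζd τ hτ).div (hWcd τ) hWne).sub
        (((F_hasDeriv (q+1) hτ).ofReal_comp).const_mul (c * 16^(q+1)))
      refine h.congr_deriv (Eq.symm ?_)
      have hA2 := hAval τ hτ
      simp only [hA, W, W1, Nat.add_sub_cancel] at hA2
      push_cast at hA2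
      have hpow : (16:ℂ)^(q+1) * (((((1:ℂ) - (τ:ℂ)^2))/4)^(q+1))^2
          = ((1:ℂ) - (τ:ℂ)^2)^(2*(q+1)) := by
        calc (16:ℂ)^(q+1) * (((((1:ℂ) - (τ:ℂ)^2))/4)^(q+1))^2
            = (16 * ((((1:ℂ) - (τ:ℂ)^2))/4)^2)^(q+1) := by
              rw [← pow_mul, mul_comm (q+1) 2, pow_mul, ← mul_pow]
          _ = (((1:ℂ) - (τ:ℂ)^2)^2)^(q+1) := by congr 1; ring
          _ = ((1:ℂ) - (τ:ℂ)^2)^(2*(q+1)) := by rw [← pow_mul]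
      simp only [F1]
      push_cast
      rw [eq_comm, sub_eq_zero, mul_one_div]
      rw [div_eq_div_iff (pow_ne_zero _ hWne) (pow_ne_zero _ hbC)]
      linear_combination (((1:ℂ) - (τ:ℂ)^2)^(q+1)) * hA2 - c * hpow
    have hGc0 : ∀ τ ∈ Ioo (-1:ℝ) 1, G τ = G 0 :=
      fun τ hτ => const_on hGd hτ mem0
    obtain ⟨C₁, hGc⟩ : ∃ C₁ : ℂ, ∀ τ ∈ Ioo (-1:ℝ) 1, G τ = C₁ := ⟨G 0, hGc0⟩
    refine ⟨C₁, c * 16^(q+1), ?_⟩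
    intro τ hτ
    have h := hGc τ hτ
    rw [hG] at h
    have hbC := hbC_ne hτ
    have hWne : ((((1:ℂ) - (τ:ℂ)^2))/4)^(q+1) ≠ 0 :=
      pow_ne_zero _ (div_ne_zero hbC (by norm_num))
    have hstate : ((((1 - τ) / 2) ^ (q+1) * ((1 + τ) / 2) ^ (q+1) : ℝ) : ℂ)
        = ((((1:ℂ) - (τ:ℂ)^2))/4)^(q+1) := by
      push_cast
      rw [← mul_pow]
      congr 1
      ring
    rw [hstate]
    have hFdef : ((∫ s in (0 : ℝ)..τ, 1 / (1 - s ^ 2) ^ ((q+1) + 1) : ℝ) : ℂ)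
        = ((F (q+1) τ : ℝ) : ℂ) := rfl
    rw [hFdef]
    have h2 : ζ τ / ((((1:ℂ) - (τ:ℂ)^2))/4)^(q+1)
        = C₁ + c * 16^(q+1) * ((F (q+1) τ : ℝ) : ℂ) := by linear_combination h
    rw [div_eq_iff hWne] at h2
    rw [h2]
    ring
  · rintro ⟨C₁, C₂, h⟩ τ hτ
    set g : ℝ → ℂ := fun τ => ((W p τ : ℝ) : ℂ) * (C₁ + C₂ * ((F p τ : ℝ) : ℂ)) with hg
    have hζg : ∀ σ ∈ Ioo (-1:ℝ) 1, ζ σ = g σ := by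
      intro σ hσ
      rw [h σ hσ, hg]; simp only [Wform]; rfl
    set g1 : ℝ → ℂ := fun τ => ((W1 p τ : ℝ) : ℂ) * (C₁ + C₂ * ((F p τ : ℝ) : ℂ))
        + ((W p τ : ℝ) : ℂ) * (C₂ * ((F1 p τ : ℝ) : ℂ)) with hg1
    set g2 : ℝ → ℂ := fun τ => (((W2 p τ : ℝ) : ℂ) * (C₁ + C₂ * ((F p τ : ℝ) : ℂ))
          + ((W1 p τ : ℝ) : ℂ) * (C₂ * ((F1 p τ : ℝ) : ℂ)))
        + (((W1 p τ : ℝ) : ℂ) * (C₂ * ((F1 p τ : ℝ) : ℂ))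
          + ((W p τ : ℝ) : ℂ) * (C₂ * ((F2 p τ : ℝ) : ℂ))) with hg2
    have hKd : ∀ σ ∈ Ioo (-1:ℝ) 1, HasDerivAt (fun τ : ℝ => C₁ + C₂ * ((F p τ : ℝ) : ℂ))
        (C₂ * ((F1 p σ : ℝ) : ℂ)) σ := fun σ hσ =>
      (((F_hasDeriv p hσ).ofReal_comp).const_mul C₂).const_add C₁
    have hgd : ∀ σ ∈ Ioo (-1:ℝ) 1, HasDerivAt g (g1 σ) σ := fun σ hσ =>
      ((W_hasDeriv p σ).ofReal_comp).mul (hKd σ hσ)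
    have hg1d : ∀ σ ∈ Ioo (-1:ℝ) 1, HasDerivAt g1 (g2 σ) σ := fun σ hσ =>
      (((W1_hasDeriv p σ).ofReal_comp).mul (hKd σ hσ)).add
        (((W_hasDeriv p σ).ofReal_comp).mul
          ((((F1_hasDeriv p hσ).ofReal_comp).const_mul C₂)))
    have hd1 : ∀ σ ∈ Ioo (-1:ℝ) 1, deriv ζ σ = g1 σ := by
      intro σ hσ
      have hEqσ : ζ =ᶠ[nhds σ] g :=
        Filter.eventuallyEq_of_mem (isOpen_Ioo.mem_nhds hσ) hζg
      rw [hEqσ.deriv_eq, (hgd σ hσ).deriv]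
    have hd2 : deriv (deriv ζ) τ = g2 τ := by
      have hEq1 : deriv ζ =ᶠ[nhds τ] g1 :=
        Filter.eventuallyEq_of_mem (isOpen_Ioo.mem_nhds hτ) hd1
      rw [hEq1.deriv_eq, (hg1d τ hτ).deriv]
    rw [hd2, hd1 τ hτ, hζg τ hτ]
    have k1 := congrArg (fun x : ℝ => (x : ℂ)) (key1 p hp τ)
    have k2 := congrArg (fun x : ℝ => (x : ℂ)) (key2 p hp hτ)
    push_cast at k1 k2
    simp only [hg, hg1, hg2]
    push_cast
    linear_combination (C₁ + C₂ * ((F p τ : ℝ) : ℂ)) * k1 + C₂ * k2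
end

section
/- For ℓ = p ≥ 1, the general solution of (1-τ²)ζ'' + 2((p-1)τ + 1)ζ' + 2p·ζ = 0 on (-1,1) is ζ(τ) = ((1-τ)/2)^{p+1} ((1+τ)/2)^{p-1} (C₃ + C₄ ∫₀^τ ds/((1-s)^{p+2}(1+s)^p)) for constants C₃, C₄. -/
open Set intervalIntegral

private lemma hasDerivAt_pow_div (n : ℕ) {f : ℝ → ℝ} {x f' : ℝ} (hf : HasDerivAt f f' x)
    (hx : f x ≠ 0) :
    HasDerivAt (fun t => f t ^ n) ((n : ℝ) * f x ^ n * f' / f x) x := by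
  have h := hf.fun_pow n
  refine h.congr_deriv ?_
  cases n with
  | zero => simp
  | succ m =>
      simp only [Nat.succ_sub_one]
      field_simp
      ring

private noncomputable def Wf (q : ℕ) (t : ℝ) : ℝ := ((1-t)/2)^(q+1+1) * ((1+t)/2)^q

private noncomputable def W1f (q : ℕ) (t : ℝ) : ℝ :=
  -(((q:ℝ)+2)/2) * ((1-t)/2)^(q+1) * ((1+t)/2)^q
    + ((1-t)/2)^(q+1+1) * ((q:ℝ) * ((1+t)/2)^q / (2*((1+t)/2)))

private noncomputable def W2f (q : ℕ) (t : ℝ) : ℝ :=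
  ((q:ℝ)+2)*((q:ℝ)+1)/4 * ((1-t)/2)^q * ((1+t)/2)^q
  - ((q:ℝ)+2)*(q:ℝ)/2 * ((1-t)/2)^(q+1) * ((1+t)/2)^q / ((1+t)/2)
  + (q:ℝ)*((q:ℝ)-1)/4 * ((1-t)/2)^(q+1+1) * ((1+t)/2)^q / ((1+t)/2)^2

private noncomputable def muf (q : ℕ) (s : ℝ) : ℝ := 1/((1-s)^(q+1+2) * (1+s)^(q+1))

private noncomputable def mudf (q : ℕ) (s : ℝ) : ℝ :=
  -((-((q:ℝ)+3))*(1-s)^(q+2)*(1+s)^(q+1) + ((q:ℝ)+1)*(1-s)^(q+1+2)*(1+s)^q)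
    / ((1-s)^(q+1+2)*(1+s)^(q+1))^2

private lemma hasDerivAt_A (t : ℝ) : HasDerivAt (fun t : ℝ => (1-t)/2) (-1/2) t := by
  simpa using ((hasDerivAt_id t).const_sub 1).div_const 2

private lemma hasDerivAt_B (t : ℝ) : HasDerivAt (fun t : ℝ => (1+t)/2) (1/2) t := by
  simpa using ((hasDerivAt_id t).const_add 1).div_const 2

private lemma hasDerivAt_Wf (q : ℕ) {t : ℝ} (h2 : (1:ℝ)+t ≠ 0) :
    HasDerivAt (Wf q) (W1f q t) t := by
  have h2' : ((1:ℝ)+t)/2 ≠ 0 := by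
    intro h; apply h2; linarith [(div_eq_zero_iff.mp h).resolve_right (by norm_num)]
  have hA := (hasDerivAt_A t).fun_pow (q+1+1)
  have hB := hasDerivAt_pow_div q (hasDerivAt_B t) h2'
  have := hA.mul hB
  refine this.congr_deriv ?_
  simp only [Nat.add_sub_cancel, W1f]
  field_simp
  push_cast
  ring

private lemma hasDerivAt_W1f (q : ℕ) {t : ℝ} (h2 : (1:ℝ)+t ≠ 0) :
    HasDerivAt (W1f q) (W2f q t) t := by
  have h2' : ((1:ℝ)+t)/2 ≠ 0 := by
    intro h; apply h2; linarith [(div_eq_zero_iff.mp h).resolve_right (by norm_num)]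
  have hA1 := (hasDerivAt_A t).fun_pow (q+1)
  have hA2 := (hasDerivAt_A t).fun_pow (q+1+1)
  have hB := hasDerivAt_pow_div q (hasDerivAt_B t) h2'
  have hden : HasDerivAt (fun t : ℝ => 2*((1+t)/2)) 1 t := by
    simpa using (hasDerivAt_B t).const_mul 2
  have hQ : HasDerivAt (fun t : ℝ => (q:ℝ) * ((1+t)/2)^q / (2*((1+t)/2)))
      ((((q:ℝ) * ((q:ℝ) * ((1+t)/2)^q * (1/2) / ((1+t)/2))) * (2*((1+t)/2))
        - (q:ℝ) * ((1+t)/2)^q * 1) / (2*((1+t)/2))^2) t :=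
    (hB.const_mul (q:ℝ)).div hden (by simpa using h2')
  have := ((hA1.fun_mul hB).const_mul (-(((q:ℝ)+2)/2))).fun_add (hA2.fun_mul hQ)
  refine HasDerivAt.congr_deriv (HasDerivAt.congr_of_eventuallyEq this (Filter.Eventually.of_forall ?_)) ?_
  · intro s; simp only [W1f]; ring
  · simp only [Nat.add_sub_cancel, W2f]
    field_simp
    push_cast
    ring

private lemma hasDerivAt_muf (q : ℕ) {t : ℝ} (h1 : (1:ℝ)-t ≠ 0) (h2 : (1:ℝ)+t ≠ 0) :
    HasDerivAt (muf q) (mudf q t) t := by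
  have hK : HasDerivAt (fun s : ℝ => (1-s)^(q+1+2) * (1+s)^(q+1))
      ((-((q:ℝ)+3))*(1-t)^(q+2)*(1+t)^(q+1) + ((q:ℝ)+1)*(1-t)^(q+1+2)*(1+t)^q) t := by
    have hA : HasDerivAt (fun s : ℝ => (1:ℝ)-s) (-1) t := by
      simpa using (hasDerivAt_id t).const_sub 1
    have hB : HasDerivAt (fun s : ℝ => (1:ℝ)+s) 1 t := by
      simpa using (hasDerivAt_id t).const_add 1
    have := (hA.fun_pow (q+1+2)).mul (hB.fun_pow (q+1))
    refine this.congr_deriv ?_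
    simp only [Nat.add_sub_cancel]
    push_cast
    ring
  have hKne : (1-t)^(q+1+2) * (1+t)^(q+1) ≠ 0 :=
    mul_ne_zero (pow_ne_zero _ h1) (pow_ne_zero _ h2)
  have h' := hK.inv hKne
  unfold muf mudf
  simp only [one_div]
  exact h'

private lemma E1 (q : ℕ) {t : ℝ} (h1 : (1:ℝ)-t ≠ 0) (h2 : (1:ℝ)+t ≠ 0) :
    (1-t^2) * W2f q t + 2*((q:ℝ)*t+1) * W1f q t + 2*((q:ℝ)+1) * Wf q t = 0 := by
  have h2' : ((1:ℝ)+t)/2 ≠ 0 := by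
    intro h; apply h2; linarith [(div_eq_zero_iff.mp h).resolve_right (by norm_num)]
  simp only [Wf, W1f, W2f]
  field_simp
  ring

private lemma E2 (q : ℕ) {t : ℝ} (h1 : (1:ℝ)-t ≠ 0) (h2 : (1:ℝ)+t ≠ 0) :
    (1-t^2) * (2 * W1f q t * muf q t + Wf q t * mudf q t)
      + 2*((q:ℝ)*t+1) * (Wf q t * muf q t) = 0 := by
  have h2' : ((1:ℝ)+t)/2 ≠ 0 := by
    intro h; apply h2; linarith [(div_eq_zero_iff.mp h).resolve_right (by norm_num)]
  have h1' : ((1:ℝ)-t)/2 ≠ 0 := by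
    intro h; apply h1; linarith [(div_eq_zero_iff.mp h).resolve_right (by norm_num)]
  simp only [Wf, W1f, W2f, muf, mudf]
  field_simp
  ring

private lemma E4 (q : ℕ) {t : ℝ} (h1 : (1:ℝ)-t ≠ 0) (h2 : (1:ℝ)+t ≠ 0) :
    (1-t^2)^(q+1) = 2^(4*(q+1)) * muf q t * ((1+t)^2 * (Wf q t)^2) := by
  simp only [Wf, muf]
  rw [show (1-t^2 : ℝ) = (1-t)*(1+t) from by ring, mul_pow]
  simp only [div_pow]
  field_simp
  ring

private lemma const_on_Ioo {f : ℝ → ℂ} (hf : ∀ x ∈ Ioo (-1:ℝ) 1, HasDerivAt f 0 x) :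
    ∀ τ ∈ Ioo (-1:ℝ) 1, f τ = f 0 := by
  intro τ hτ
  have h0 : (0:ℝ) ∈ Ioo (-1:ℝ) 1 := by norm_num
  have hsub : uIcc 0 τ ⊆ Ioo (-1:ℝ) 1 := Set.ordConnected_Ioo.uIcc_subset h0 hτ
  have hcont : ContinuousOn f (Icc (0 ⊓ τ) (0 ⊔ τ)) := fun x hx =>
    ((hf x (hsub hx)).continuousAt).continuousWithinAt
  have hd : ∀ x ∈ Ico (0 ⊓ τ) (0 ⊔ τ), HasDerivWithinAt f 0 (Ici x) x := fun x hx =>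
    (hf x (hsub ⟨hx.1, le_of_lt hx.2⟩)).hasDerivWithinAt
  have h1 := constant_of_has_deriv_right_zero hcont hd τ ⟨inf_le_right, le_sup_right⟩
  have h2 := constant_of_has_deriv_right_zero hcont hd 0 ⟨inf_le_left, le_sup_left⟩
  rw [h1, h2]

private lemma muf_contOn (q : ℕ) : ContinuousOn (muf q) (Ioo (-1:ℝ) 1) := by
  apply ContinuousOn.div continuousOn_const (by fun_prop)
  intro x hx
  have l1 : (0:ℝ) < 1 - x := by linarith [hx.2]
  have l2 : (0:ℝ) < 1 + x := by linarith [hx.1]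
  exact mul_ne_zero (pow_ne_zero _ (ne_of_gt l1)) (pow_ne_zero _ (ne_of_gt l2))

private lemma hasDerivAt_I (q : ℕ) {τ : ℝ} (hτ : τ ∈ Ioo (-1:ℝ) 1) :
    HasDerivAt (fun t => ∫ s in (0:ℝ)..t, muf q s) (muf q τ) τ := by
  have h0 : (0:ℝ) ∈ Ioo (-1:ℝ) 1 := by norm_num
  have hsub : uIcc 0 τ ⊆ Ioo (-1:ℝ) 1 := Set.ordConnected_Ioo.uIcc_subset h0 hτ
  exact intervalIntegral.integral_hasDerivAt_right
    (((muf_contOn q).mono hsub).intervalIntegrable)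
    ((muf_contOn q).stronglyMeasurableAtFilter isOpen_Ioo τ hτ)
    ((muf_contOn q).continuousAt (isOpen_Ioo.mem_nhds hτ))

/-- for `ℓ = p ≥ 1` the general solution of
`(1-τ²)ζ'' + 2((p-1)τ + 1)ζ' + 2pζ = 0` on `(-1,1)` is
`ζ(τ) = ((1-τ)/2)^{p+1} ((1+τ)/2)^{p-1} (C₃ + C₄ ∫₀^τ ds/((1-s)^{p+2}(1+s)^p))`. -/
theorem stmt5 (p : ℕ) (hp : 1 ≤ p) (ζ : ℝ → ℂ)
    (hreg : ∀ τ ∈ Set.Ioo (-1 : ℝ) 1, ContDiffAt ℝ 2 ζ τ) :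
    (∀ τ ∈ Set.Ioo (-1 : ℝ) 1,
      (1 - (τ : ℂ) ^ 2) * deriv (deriv ζ) τ +
        2 * (((p : ℂ) - 1) * (τ : ℂ) + 1) * deriv ζ τ + 2 * (p : ℂ) * ζ τ = 0) ↔
    ∃ C₃ C₄ : ℂ, ∀ τ ∈ Set.Ioo (-1 : ℝ) 1,
      ζ τ = ((((1 - τ) / 2) ^ (p + 1) * ((1 + τ) / 2) ^ (p - 1) : ℝ) : ℂ) *
        (C₃ + C₄ * ((∫ s in (0 : ℝ)..τ,
          1 / ((1 - s) ^ (p + 2) * (1 + s) ^ p) : ℝ) : ℂ)) := by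
  obtain ⟨q, rfl⟩ : ∃ q, p = q + 1 := ⟨p - 1, (Nat.succ_pred_eq_of_pos hp).symm⟩
  simp only [Nat.add_sub_cancel]
  have hfacts : ∀ τ ∈ Ioo (-1:ℝ) 1, ((1:ℝ)-τ ≠ 0 ∧ (1:ℝ)+τ ≠ 0 ∧ Wf q τ ≠ 0) := by
    intro τ hτ
    have l1 : (0:ℝ) < 1 - τ := by linarith [hτ.2]
    have l2 : (0:ℝ) < 1 + τ := by linarith [hτ.1]
    refine ⟨ne_of_gt l1, ne_of_gt l2, ?_⟩
    unfold Wf; positivity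
  constructor
  · -- forward direction
    intro hode
    have hCD : ContDiffOn ℝ 2 ζ (Ioo (-1:ℝ) 1) := fun x hx => (hreg x hx).contDiffWithinAt
    have hd1 : ∀ τ ∈ Ioo (-1:ℝ) 1, HasDerivAt ζ (deriv ζ τ) τ := fun τ hτ =>
      ((hreg τ hτ).differentiableAt (by norm_num)).hasDerivAt
    have hd2 : ∀ τ ∈ Ioo (-1:ℝ) 1, HasDerivAt (deriv ζ) (deriv (deriv ζ) τ) τ := by
      have hder : ContDiffOn ℝ 1 (deriv ζ) (Ioo (-1:ℝ) 1) :=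
        hCD.deriv_of_isOpen isOpen_Ioo (by norm_num)
      intro τ hτ
      exact (((hder τ hτ).differentiableWithinAt (by norm_num)).differentiableAt
        (isOpen_Ioo.mem_nhds hτ)).hasDerivAt
    set g : ℝ → ℂ := fun t =>
      ((deriv ζ t * (Wf q t:ℂ) - ζ t * (W1f q t:ℂ)) * (1+(t:ℂ))^2) / (1-(t:ℂ)^2)^(q+1)
      with hgdef
    have hDne : ∀ τ ∈ Ioo (-1:ℝ) 1, (1-(τ:ℂ)^2)^(q+1) ≠ 0 := by
      intro τ hτ
      obtain ⟨l1, l2, -⟩ := hfacts τ hτ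
      apply pow_ne_zero
      have : (1:ℂ)-(τ:ℂ)^2 = ((1-τ^2 : ℝ) : ℂ) := by push_cast; ring
      rw [this, Complex.ofReal_ne_zero]
      intro h
      apply l1
      have : (1-τ)*(1+τ) = 0 := by linear_combination h
      rcases mul_eq_zero.mp this with h' | h'
      · exact h'
      · exact absurd h' l2
    have hgd : ∀ τ ∈ Ioo (-1:ℝ) 1, HasDerivAt g 0 τ := by
      intro τ hτ
      obtain ⟨l1, l2, lW⟩ := hfacts τ hτ
      have hWc : HasDerivAt (fun t => ((Wf q t : ℝ):ℂ)) ((W1f q τ:ℝ):ℂ) τ :=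
        (hasDerivAt_Wf q l2).ofReal_comp
      have hW1c : HasDerivAt (fun t => ((W1f q t : ℝ):ℂ)) ((W2f q τ:ℝ):ℂ) τ :=
        (hasDerivAt_W1f q l2).ofReal_comp
      have honep : HasDerivAt (fun t:ℝ => (1+(t:ℂ))^2) (2*(1+(τ:ℂ))) τ := by
        have h : HasDerivAt (fun z:ℂ => (1+z)^2) (2*(1+(τ:ℂ))) (τ:ℂ) := by
          have := ((hasDerivAt_id (τ:ℂ)).const_add 1).fun_pow 2
          refine this.congr_deriv ?_
          norm_num
        exact h.comp_ofReal
      have hNd : HasDerivAt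
          (fun t => (deriv ζ t * (Wf q t:ℂ) - ζ t * (W1f q t:ℂ)) * (1+(t:ℂ))^2)
          ((deriv (deriv ζ) τ * (Wf q τ:ℂ) - ζ τ * (W2f q τ:ℂ)) * (1+(τ:ℂ))^2
            + (deriv ζ τ * (Wf q τ:ℂ) - ζ τ * (W1f q τ:ℂ)) * (2*(1+(τ:ℂ)))) τ := by
        have := (((hd2 τ hτ).fun_mul hWc).fun_sub ((hd1 τ hτ).fun_mul hW1c)).fun_mul honep
        refine this.congr_deriv ?_
        ring
      have hDd : HasDerivAt (fun t:ℝ => (1-(t:ℂ)^2)^(q+1))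
          ((((q:ℂ)+1) * (1-(τ:ℂ)^2)^q) * (-(2*(τ:ℂ)))) τ := by
        have h : HasDerivAt (fun z:ℂ => (1-z^2)^(q+1))
            ((((q:ℂ)+1) * (1-(τ:ℂ)^2)^q) * (-(2*(τ:ℂ)))) (τ:ℂ) := by
          have hb : HasDerivAt (fun z:ℂ => 1-z^2) (-(2*(τ:ℂ))) (τ:ℂ) := by
            have := (hasDerivAt_pow 2 (τ:ℂ)).const_sub 1
            refine this.congr_deriv ?_
            norm_num
          have := hb.fun_pow (q+1)
          simp only [Nat.add_sub_cancel] at this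
          refine this.congr_deriv ?_
          push_cast
          ring
        exact h.comp_ofReal
      -- the key identity
      have hz := hode τ hτ
      push_cast at hz
      have hwR := E1 q l1 l2
      have hwC : (1-(τ:ℂ)^2) * ((W2f q τ:ℝ):ℂ) + 2*((q:ℂ)*(τ:ℂ)+1) * ((W1f q τ:ℝ):ℂ)
          + 2*((q:ℂ)+1) * ((Wf q τ:ℝ):ℂ) = 0 := by exact_mod_cast hwR
      have hkey : (1-(τ:ℂ)^2) *
          ((deriv (deriv ζ) τ * (Wf q τ:ℂ) - ζ τ * (W2f q τ:ℂ)) * (1+(τ:ℂ))^2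
            + (deriv ζ τ * (Wf q τ:ℂ) - ζ τ * (W1f q τ:ℂ)) * (2*(1+(τ:ℂ))))
          + 2*((q:ℂ)+1)*(τ:ℂ) *
            ((deriv ζ τ * (Wf q τ:ℂ) - ζ τ * (W1f q τ:ℂ)) * (1+(τ:ℂ))^2) = 0 := by
        linear_combination ((1+(τ:ℂ))^2 * ((Wf q τ:ℝ):ℂ)) * hz
          - ((1+(τ:ℂ))^2 * ζ τ) * hwC
      have hgd' := hNd.div hDd (hDne τ hτ)
      have hnum : ((deriv (deriv ζ) τ * (Wf q τ:ℂ) - ζ τ * (W2f q τ:ℂ)) * (1+(τ:ℂ))^2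
            + (deriv ζ τ * (Wf q τ:ℂ) - ζ τ * (W1f q τ:ℂ)) * (2*(1+(τ:ℂ))))
            * (1-(τ:ℂ)^2)^(q+1)
          - ((deriv ζ τ * (Wf q τ:ℂ) - ζ τ * (W1f q τ:ℂ)) * (1+(τ:ℂ))^2)
            * ((((q:ℂ)+1) * (1-(τ:ℂ)^2)^q) * (-(2*(τ:ℂ)))) = 0 := by
        linear_combination (1-(τ:ℂ)^2)^q * hkey
      rw [hgdef]
      refine hgd'.congr_deriv ?_
      rw [hnum]
      simp
    obtain ⟨C, hgc⟩ : ∃ C, ∀ τ ∈ Ioo (-1:ℝ) 1, g τ = C := ⟨g 0, const_on_Ioo hgd⟩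
    have hu : ∀ τ ∈ Ioo (-1:ℝ) 1, HasDerivAt
        (fun t => ζ t / ((Wf q t:ℝ):ℂ)
          - (C * 2^(4*(q+1))) * ((∫ s in (0:ℝ)..t, muf q s : ℝ):ℂ)) 0 τ := by
      intro τ hτ
      obtain ⟨l1, l2, lW⟩ := hfacts τ hτ
      have hWC : ((Wf q τ:ℝ):ℂ) ≠ 0 := Complex.ofReal_ne_zero.mpr lW
      have h1pC : (1+(τ:ℂ)) ≠ 0 := by
        intro h; apply l2
        have : ((1+τ:ℝ):ℂ) = 0 := by push_cast; linear_combination h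
        exact_mod_cast this
      have hWc : HasDerivAt (fun t => ((Wf q t : ℝ):ℂ)) ((W1f q τ:ℝ):ℂ) τ :=
        (hasDerivAt_Wf q l2).ofReal_comp
      have hudiv := (hd1 τ hτ).div hWc hWC
      have hIc : HasDerivAt (fun t => ((∫ s in (0:ℝ)..t, muf q s : ℝ):ℂ))
          ((muf q τ:ℝ):ℂ) τ := (hasDerivAt_I q hτ).ofReal_comp
      have hder := hudiv.sub (hIc.const_mul (C * 2^(4*(q+1))))
      -- value is zero
      have hgτ := hgc τ hτ
      simp only [hgdef] at hgτ
      rw [div_eq_iff (hDne τ hτ)] at hgτ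
      have hNτ : (deriv ζ τ * (Wf q τ:ℂ) - ζ τ * (W1f q τ:ℂ)) * (1+(τ:ℂ))^2
          = C * (1-(τ:ℂ)^2)^(q+1) := hgτ
      have hE4C : ((1:ℂ)-(τ:ℂ)^2)^(q+1)
          = 2^(4*(q+1)) * ((muf q τ:ℝ):ℂ) * ((1+(τ:ℂ))^2 * (((Wf q τ:ℝ):ℂ))^2) := by
        exact_mod_cast E4 q l1 l2
      have hkey2 : (deriv ζ τ * ((Wf q τ:ℝ):ℂ) - ζ τ * ((W1f q τ:ℝ):ℂ))
          = ((C * 2^(4*(q+1))) * ((muf q τ:ℝ):ℂ)) * ((Wf q τ:ℝ):ℂ)^2 := by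
        apply mul_right_cancel₀ (pow_ne_zero 2 h1pC)
        linear_combination hNτ + C * hE4C
      have hval : (deriv ζ τ * ((Wf q τ:ℝ):ℂ) - ζ τ * ((W1f q τ:ℝ):ℂ)) / ((Wf q τ:ℝ):ℂ)^2
          - (C * 2^(4*(q+1))) * ((muf q τ:ℝ):ℂ) = 0 := by
        rw [hkey2, mul_div_cancel_right₀ _ (pow_ne_zero 2 hWC), sub_self]
      rw [← hval]
      exact hder
    have huc := const_on_Ioo hu
    refine ⟨ζ 0 / ((Wf q 0:ℝ):ℂ), C * 2^(4*(q+1)), ?_⟩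
    intro τ hτ
    obtain ⟨l1, l2, lW⟩ := hfacts τ hτ
    have hWC : ((Wf q τ:ℝ):ℂ) ≠ 0 := Complex.ofReal_ne_zero.mpr lW
    have := huc τ hτ
    simp only [intervalIntegral.integral_same] at this
    push_cast at this
    simp only [mul_zero, sub_zero] at this
    have h2 : ζ τ / ((Wf q τ:ℝ):ℂ)
        = ζ 0 / ((Wf q 0:ℝ):ℂ) + (C * 2^(4*(q+1))) * ((∫ s in (0:ℝ)..τ, muf q s : ℝ):ℂ) := by
      linear_combination this
    rw [div_eq_iff hWC] at h2
    have hgoal : ζ τ = ((Wf q τ:ℝ):ℂ)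
        * (ζ 0 / ((Wf q 0:ℝ):ℂ) + (C * 2^(4*(q+1))) * ((∫ s in (0:ℝ)..τ, muf q s : ℝ):ℂ)) := by
      rw [h2]; ring
    exact hgoal
  · -- backward direction
    rintro ⟨C₃, C₄, hsol⟩ τ hτ
    obtain ⟨l1, l2, lW⟩ := hfacts τ hτ
    set I : ℝ → ℝ := fun t => ∫ s in (0:ℝ)..t, muf q s with hIdef
    set F : ℝ → ℂ := fun t => ((Wf q t:ℝ):ℂ) * (C₃ + C₄ * ((I t:ℝ):ℂ)) with hFdef
    set F1 : ℝ → ℂ := fun t => ((W1f q t:ℝ):ℂ) * (C₃ + C₄ * ((I t:ℝ):ℂ))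
      + ((Wf q t:ℝ):ℂ) * (C₄ * ((muf q t:ℝ):ℂ)) with hF1def
    have hsolF : ∀ t ∈ Ioo (-1:ℝ) 1, ζ t = F t := by
      intro t ht
      exact hsol t ht
    have hFd : ∀ t ∈ Ioo (-1:ℝ) 1, HasDerivAt F (F1 t) t := by
      intro t ht
      obtain ⟨m1, m2, -⟩ := hfacts t ht
      have hWc : HasDerivAt (fun s => ((Wf q s : ℝ):ℂ)) ((W1f q t:ℝ):ℂ) t :=
        (hasDerivAt_Wf q m2).ofReal_comp
      have hIc : HasDerivAt (fun s => ((I s:ℝ):ℂ)) ((muf q t:ℝ):ℂ) t :=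
        (hasDerivAt_I q ht).ofReal_comp
      have := hWc.mul ((hIc.const_mul C₄).const_add C₃)
      rw [hFdef, hF1def]
      exact this
    have hevF : ζ =ᶠ[nhds τ] F :=
      Filter.eventuallyEq_of_mem (isOpen_Ioo.mem_nhds hτ) hsolF
    have hder1 : ∀ t ∈ Ioo (-1:ℝ) 1, deriv ζ t = F1 t := by
      intro t ht
      have hev : ζ =ᶠ[nhds t] F :=
        Filter.eventuallyEq_of_mem (isOpen_Ioo.mem_nhds ht) hsolF
      rw [hev.deriv_eq, (hFd t ht).deriv]
    -- second derivative
    have hWc : HasDerivAt (fun s => ((Wf q s : ℝ):ℂ)) ((W1f q τ:ℝ):ℂ) τ :=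
      (hasDerivAt_Wf q l2).ofReal_comp
    have hW1c : HasDerivAt (fun s => ((W1f q s : ℝ):ℂ)) ((W2f q τ:ℝ):ℂ) τ :=
      (hasDerivAt_W1f q l2).ofReal_comp
    have hmuc : HasDerivAt (fun s => ((muf q s:ℝ):ℂ)) ((mudf q τ:ℝ):ℂ) τ :=
      (hasDerivAt_muf q l1 l2).ofReal_comp
    have hIc : HasDerivAt (fun s => ((I s:ℝ):ℂ)) ((muf q τ:ℝ):ℂ) τ :=
      (hasDerivAt_I q hτ).ofReal_comp
    have hF1d : HasDerivAt F1
        (((W2f q τ:ℝ):ℂ) * (C₃ + C₄ * ((I τ:ℝ):ℂ))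
          + ((W1f q τ:ℝ):ℂ) * (C₄ * ((muf q τ:ℝ):ℂ))
          + (((W1f q τ:ℝ):ℂ) * (C₄ * ((muf q τ:ℝ):ℂ))
            + ((Wf q τ:ℝ):ℂ) * (C₄ * ((mudf q τ:ℝ):ℂ)))) τ := by
      have := (hW1c.mul ((hIc.const_mul C₄).const_add C₃)).add
        (hWc.mul (hmuc.const_mul C₄))
      rw [hF1def]
      exact this
    have hder2 : deriv (deriv ζ) τ
        = ((W2f q τ:ℝ):ℂ) * (C₃ + C₄ * ((I τ:ℝ):ℂ))
          + ((W1f q τ:ℝ):ℂ) * (C₄ * ((muf q τ:ℝ):ℂ))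
          + (((W1f q τ:ℝ):ℂ) * (C₄ * ((muf q τ:ℝ):ℂ))
            + ((Wf q τ:ℝ):ℂ) * (C₄ * ((mudf q τ:ℝ):ℂ))) := by
      have hev : deriv ζ =ᶠ[nhds τ] F1 :=
        Filter.eventuallyEq_of_mem (isOpen_Ioo.mem_nhds hτ) hder1
      rw [hev.deriv_eq, hF1d.deriv]
    rw [hder2, hder1 τ hτ, hsolF τ hτ, hF1def, hFdef]
    have hwC : (1-(τ:ℂ)^2) * ((W2f q τ:ℝ):ℂ) + 2*((q:ℂ)*(τ:ℂ)+1) * ((W1f q τ:ℝ):ℂ)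
        + 2*((q:ℂ)+1) * ((Wf q τ:ℝ):ℂ) = 0 := by exact_mod_cast E1 q l1 l2
    have hw2C : (1-(τ:ℂ)^2) * (2 * ((W1f q τ:ℝ):ℂ) * ((muf q τ:ℝ):ℂ)
          + ((Wf q τ:ℝ):ℂ) * ((mudf q τ:ℝ):ℂ))
        + 2*((q:ℂ)*(τ:ℂ)+1) * (((Wf q τ:ℝ):ℂ) * ((muf q τ:ℝ):ℂ)) = 0 := by
      exact_mod_cast E2 q l1 l2
    push_cast
    linear_combination (C₃ + C₄ * ((I τ:ℝ):ℂ)) * hwC + C₄ * hw2C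
end
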